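/- Let $G$ be a locally compact non-compact Polish group with right-invariant metric $d$ such that $\{g : d(g,1_G) \leq 1\}$ is compact. Then the $G$-flow $\mathrm{Lip}(G,[0,1])^\omega$ is model-universal: for every free measure-preserving Borel $G$-action on a standard Lebesgue space $(X,\mu)$, there is a $G$-invariant Borel probability measure $\nu$ on $\mathrm{Lip}(G,[0,1])^\omega$ such that $(X,\mu)$ is isomorphic as a measure-preserving $G$-system to $(\mathrm{Lip}(G,[0,1])^\omega, \nu)$. -/

import Mathlib

open MeasureTheory

/-- The flow `Lip(G,[0,1])^ω`, realized as sequences of `1`-Lipschitz `[0,1]`-valued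
functions on `G`, with the (trace of the) product measurable structure. -/
abbrev LipSeq (G : Type) [MetricSpace G] : Type :=
  {F : ℕ → G → ℝ // ∀ n, LipschitzWith 1 (F n) ∧ ∀ h, F n h ∈ Set.Icc (0 : ℝ) 1}

open MeasureTheory Metric Filter
open scoped Classical Topology ENNReal

section Aux
variable {G : Type} [MetricSpace G]

noncomputable def tent (m : ℕ) (c : G) (q : ℚ) (g : G) : ℝ :=
  min 1 (max 0 (1 - m * (dist g c - q)))

lemma tent_nonneg (m : ℕ) (c : G) (q : ℚ) (g : G) : 0 ≤ tent m c q g := by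
  simp [tent]

lemma tent_le_one (m : ℕ) (c : G) (q : ℚ) (g : G) : tent m c q g ≤ 1 := min_le_left _ _

lemma tent_eq_one (m : ℕ) {c : G} {q : ℚ} {g : G} (h : dist g c ≤ q) : tent m c q g = 1 := by
  have h1 : (1:ℝ) ≤ 1 - m * (dist g c - q) := by nlinarith [Nat.cast_nonneg (α := ℝ) m]
  simp only [tent]
  rw [max_eq_right (by linarith), min_eq_left h1]

lemma tent_eq_zero {m : ℕ} {c : G} {q : ℚ} {g : G} (h : (q:ℝ) < dist g c)
    (hm : 1/(dist g c - q) ≤ m) : tent m c q g = 0 := by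
  have hpos : (0:ℝ) < dist g c - q := by linarith
  have : 1 - m * (dist g c - q) ≤ 0 := by
    have := (div_le_iff₀ hpos).1 hm
    nlinarith
  simp only [tent]
  rw [max_eq_left this]
  simp

lemma tent_pos_imp {m : ℕ} {c : G} {q : ℚ} {g : G} (h : tent m c q g ≠ 0) (hm : 0 < m) :
    dist g c < q + 1/m := by
  by_contra hle
  push_neg at hle
  have hq : (q:ℝ) < dist g c := by
    have : (0:ℝ) < 1/m := by positivity
    linarith
  exact h (tent_eq_zero hq (by
    rw [div_le_iff₀ (by linarith)]
    have h2 : (1:ℝ)/m ≤ dist g c - q := by linarith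
    calc (1:ℝ) = (1/m) * m := by field_simp
    _ ≤ (dist g c - q) * m := mul_le_mul_of_nonneg_right h2 (by positivity)
    _ = m * (dist g c - q) := mul_comm _ _))

lemma tent_lipschitz (m : ℕ) (c : G) (q : ℚ) : LipschitzWith m (tent m c q) := by
  have h1 : LipschitzWith m (fun t : ℝ => min 1 (max 0 (1 - m * (t - q)))) := by
    have h0 : LipschitzWith m (fun t : ℝ => 1 - m * (t - q)) := by
      apply LipschitzWith.of_dist_le_mul
      intro s t
      simp only [Real.dist_eq]
      have : (1 - m * (s - q)) - (1 - m * (t - q)) = -(m * (s - t)) := by ring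
      rw [this, abs_neg, abs_mul, abs_of_nonneg (by positivity : (0:ℝ) ≤ (m:ℝ))]
      exact mul_le_mul_of_nonneg_left le_rfl (by positivity)
    exact (h0.const_max 0).const_min 1
  have h2 := h1.comp (LipschitzWith.dist_left c)
  simp only [mul_one] at h2
  exact h2

noncomputable def tentMin (c : ℕ → G) (m : ℕ) (L : List (ℕ × ℚ)) (g : G) : ℝ :=
  L.foldr (fun p r => min (tent m (c p.1) p.2 g) r) 1

def testSet (c : ℕ → G) (L : List (ℕ × ℚ)) : Set G :=
  {g | ∀ p ∈ L, dist g (c p.1) ≤ (p.2 : ℝ)}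

variable {c : ℕ → G} {m : ℕ} {L : List (ℕ × ℚ)} {g : G}

lemma tentMin_nonneg : 0 ≤ tentMin c m L g := by
  induction L with
  | nil => simp [tentMin]
  | cons p L ih => exact le_min (tent_nonneg _ _ _ _) ih

lemma tentMin_le_one : tentMin c m L g ≤ 1 := by
  induction L with
  | nil => simp [tentMin]
  | cons p L ih => exact le_trans (min_le_right _ _) ih

lemma tentMin_le_of_mem {p : ℕ × ℚ} (hp : p ∈ L) :
    tentMin c m L g ≤ tent m (c p.1) p.2 g := by
  induction L with
  | nil => simp at hp
  | cons p' L ih =>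
    rcases List.mem_cons.1 hp with h | h
    · subst h; exact min_le_left _ _
    · exact le_trans (min_le_right _ _) (ih h)

lemma tentMin_eq_one (h : ∀ p ∈ L, tent m (c p.1) p.2 g = 1) : tentMin c m L g = 1 := by
  induction L with
  | nil => simp [tentMin]
  | cons p L ih =>
    show min _ _ = 1
    rw [h p (by simp)]
    have := ih (fun p hp => h p (List.mem_cons_of_mem _ hp))
    simp only [tentMin] at this
    rw [this]; simp

lemma tentMin_lipschitz : LipschitzWith m (tentMin c m L) := by
  induction L with
  | nil => exact (LipschitzWith.const' (1:ℝ) (K := m))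
  | cons p L ih =>
    have := (tent_lipschitz m (c p.1) p.2).min ih
    rw [max_self] at this
    exact this

lemma tentMin_continuous : Continuous (tentMin c m L) :=
  (tentMin_lipschitz (c := c) (m := m) (L := L)).continuous

lemma tendsto_tentMin (c : ℕ → G) (L : List (ℕ × ℚ)) (g : G) :
    Tendsto (fun m => tentMin c m L g) atTop
      (𝓝 (Set.indicator (testSet c L) (fun _ => (1:ℝ)) g)) := by
  by_cases hg : g ∈ testSet c L
  · rw [Set.indicator_of_mem hg]
    have : ∀ m : ℕ, tentMin c m L g = 1 := fun m =>
      tentMin_eq_one (fun p hp => tent_eq_one m (hg p hp))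
    simp only [this]
    exact tendsto_const_nhds
  · rw [Set.indicator_of_notMem hg]
    simp only [testSet, Set.mem_setOf_eq, not_forall] at hg
    obtain ⟨p, hpL, hpd⟩ := hg
    push_neg at hpd
    apply squeeze_zero (fun _ => tentMin_nonneg) (fun m => tentMin_le_of_mem hpL)
    have hev : ∀ᶠ m : ℕ in atTop, tent m (c p.1) p.2 g = 0 := by
      filter_upwards [eventually_ge_atTop ⌈1/(dist g (c p.1) - (p.2:ℝ))⌉₊] with m hm
      exact tent_eq_zero hpd (le_trans (Nat.le_ceil _) (by exact_mod_cast hm))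
    exact Tendsto.congr' (by filter_upwards [hev] with m hm using hm.symm) tendsto_const_nhds

lemma isClosed_testSet : IsClosed (testSet c L) := by
  induction L with
  | nil => simpa [testSet] using isClosed_univ
  | cons p L ih =>
    have : testSet c (p :: L) = {g | dist g (c p.1) ≤ (p.2:ℝ)} ∩ testSet c L := by
      ext g
      simp [testSet, List.forall_mem_cons]
    rw [this]
    exact (isClosed_le (by fun_prop) continuous_const).inter ih

lemma testSet_append {L' : List (ℕ × ℚ)} :
    testSet c (L ++ L') = testSet c L ∩ testSet c L' := by
  ext g
  constructor
  · intro h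
    exact ⟨fun p hp => h p (List.mem_append_left _ hp), fun p hp => h p (List.mem_append_right _ hp)⟩
  · rintro ⟨h1, h2⟩ p hp
    rcases List.mem_append.1 hp with h | h
    · exact h1 p h
    · exact h2 p h

lemma testSet_single {i : ℕ} {q : ℚ} : testSet c [(i, q)] = closedBall (c i) q := by
  ext g
  simp [testSet, closedBall]

lemma tentMin_support {p : ℕ × ℚ} {L' : List (ℕ × ℚ)} (hL : L = p :: L')
    (hq : p.2 ≤ 1/4) (hm : 4 ≤ m) (h : tentMin c m L g ≠ 0) :
    g ∈ closedBall (c p.1) (1/2) := by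
  have h1 : tent m (c p.1) p.2 g ≠ 0 := by
    intro h0
    apply h
    have hle : tentMin c m L g ≤ 0 := by
      rw [← h0]; exact tentMin_le_of_mem (by simp [hL])
    exact le_antisymm hle tentMin_nonneg
  have := tent_pos_imp h1 (by omega)
  have hq' : (p.2 : ℝ) ≤ 1/4 := by
    rw [show ((1:ℝ)/4) = ((1/4 : ℚ) : ℝ) by norm_num]
    exact_mod_cast hq
  have hminv : (1:ℝ)/m ≤ 1/4 := by
    apply div_le_div_of_nonneg_left (by norm_num) (by norm_num)
    exact_mod_cast hm
  simp only [mem_closedBall]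
  linarith

end Aux

section Grp
variable {G : Type} [MetricSpace G] [Group G] [IsTopologicalGroup G]
    [PolishSpace G] [LocallyCompactSpace G] [MeasurableSpace G] [BorelSpace G]

lemma ball_compact (hd : ∀ g h k : G, dist (g * k) (h * k) = dist g h)
    (hball : IsCompact {g : G | dist g 1 ≤ 1}) (c : G) {r : ℝ} (hr : r ≤ 1) :
    IsCompact (closedBall c r) := by
  apply IsCompact.of_isClosed_subset (hball.image (continuous_mul_right c)) Metric.isClosed_closedBall
  intro g hg
  refine ⟨g * c⁻¹, ?_, by group⟩
  have := hd (g * c⁻¹) 1 c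
  simp only [inv_mul_cancel_right, one_mul] at this
  simp only [Set.mem_setOf_eq]
  rw [← this]
  calc dist g c ≤ r := hg
  _ ≤ 1 := hr

lemma key_zero (hd : ∀ g h k : G, dist (g * k) (h * k) = dist g h)
    (hball : IsCompact {g : G | dist g 1 ≤ 1})
    (μH : Measure G) [μH.IsHaarMeasure]
    (c : ℕ → G) (hc : DenseRange c)
    (u : G → ℝ) (hu : Measurable u) (hub : ∀ g, |u g| ≤ 1)
    (hint : ∀ (L : List (ℕ × ℚ)) (m : ℕ), L ≠ [] → 4 ≤ m →
      (∀ p ∈ L, 0 < p.2 ∧ p.2 ≤ 1/4) →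
      ∫ g, u g * tentMin c m L g ∂μH = 0) :
    ∀ᵐ g ∂μH, u g = 0 := by
  -- Step 1: integrals over test sets vanish
  have H1 : ∀ (L : List (ℕ × ℚ)), L ≠ [] → (∀ p ∈ L, 0 < p.2 ∧ p.2 ≤ 1/4) →
      ∫ g in testSet c L, u g ∂μH = 0 := by
    intro L hL hLv
    obtain ⟨p, L', rfl⟩ := List.exists_cons_of_ne_nil hL
    set B := closedBall (c p.1) (1/2 : ℝ) with hB
    have hBc : IsCompact B := ball_compact hd hball _ (by norm_num)
    have hBfin : μH B ≠ ∞ := hBc.measure_lt_top.ne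
    have hbound_int : Integrable (B.indicator fun _ => (1:ℝ)) μH := by
      rw [integrable_indicator_iff hBc.measurableSet]
      exact (integrableOn_const_iff).2 (Or.inr hBc.measure_lt_top)
    have hwm : ∀ m : ℕ, AEStronglyMeasurable (fun g => u g * tentMin c m (p :: L') g) μH :=
      fun m => (hu.mul tentMin_continuous.measurable).aestronglyMeasurable
    have hdom : ∀ᶠ (m : ℕ) in atTop, ∀ᵐ g ∂μH,
        ‖u g * tentMin c m (p :: L') g‖ ≤ B.indicator (fun _ => (1:ℝ)) g := by
      filter_upwards [eventually_ge_atTop 4] with m hm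
      refine ae_of_all _ fun g => ?_
      by_cases h0 : tentMin c m (p :: L') g = 0
      · simp only [h0, mul_zero, norm_zero]
        exact Set.indicator_nonneg (fun _ _ => zero_le_one) g
      · have hgB : g ∈ B := tentMin_support rfl (hLv p (by simp)).2 hm h0
        rw [Set.indicator_of_mem hgB]
        rw [norm_mul, Real.norm_eq_abs, Real.norm_eq_abs]
        calc |u g| * |tentMin c m (p :: L') g| ≤ 1 * 1 := by
              apply mul_le_mul (hub g) ?_ (abs_nonneg _) zero_le_one
              rw [abs_of_nonneg tentMin_nonneg]
              exact tentMin_le_one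
        _ = 1 := one_mul 1
    have hptw : ∀ᵐ g ∂μH, Tendsto (fun m => u g * tentMin c m (p :: L') g) atTop
        (𝓝 (u g * Set.indicator (testSet c (p :: L')) (fun _ => (1:ℝ)) g)) := by
      refine ae_of_all _ fun g => ?_
      exact (tendsto_tentMin c (p :: L') g).const_mul (u g)
    have hlim := tendsto_integral_filter_of_dominated_convergence
      (μ := μH) (bound := B.indicator fun _ => (1:ℝ))
      (F := fun m g => u g * tentMin c m (p :: L') g)
      (f := fun g => u g * Set.indicator (testSet c (p :: L')) (fun _ => (1:ℝ)) g)
      (Eventually.of_forall hwm) hdom hbound_int hptw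
    have hev0 : ∀ᶠ (m : ℕ) in atTop,
        (∫ g, u g * tentMin c m (p :: L') g ∂μH) = 0 := by
      filter_upwards [eventually_ge_atTop 4] with m hm
      exact hint (p :: L') m hL hm hLv
    have h0 : (∫ g, u g * Set.indicator (testSet c (p :: L')) (fun _ => (1:ℝ)) g ∂μH) = 0 :=
      tendsto_nhds_unique hlim (Tendsto.congr'
        (by filter_upwards [hev0] with m hm using hm.symm) tendsto_const_nhds)
    rw [← h0]
    rw [← integral_indicator (isClosed_testSet (c := c) (L := p :: L')).measurableSet]
    congr 1
    ext g
    by_cases hg : g ∈ testSet c (p :: L')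
    · simp [Set.indicator_of_mem hg]
    · simp [Set.indicator_of_notMem hg]
  -- Step 2: the π-system of test sets generates the Borel σ-algebra
  set P : Set (Set G) :=
    {S | ∃ L : List (ℕ × ℚ), L ≠ [] ∧ (∀ p ∈ L, 0 < p.2 ∧ p.2 ≤ 1/4) ∧ S = testSet c L} with hPdef
  have hPi : IsPiSystem P := by
    rintro S ⟨L, hL, hLv, rfl⟩ T ⟨L', hL', hLv', rfl⟩ -
    exact ⟨L ++ L', by simp [hL],
      fun p hp => (List.mem_append.1 hp).elim (hLv p) (hLv' p), testSet_append.symm⟩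
  have hPmeas : ∀ S ∈ P, MeasurableSet S := by
    rintro S ⟨L, hL, hLv, rfl⟩
    exact isClosed_testSet.measurableSet
  have hgen : (inferInstance : MeasurableSpace G) = MeasurableSpace.generateFrom P := by
    rw [BorelSpace.measurable_eq (α := G)]
    apply le_antisymm
    · show MeasurableSpace.generateFrom {s : Set G | IsOpen s} ≤ _
      apply MeasurableSpace.generateFrom_le
      intro U hU
      have hUdec : U = ⋃ (t : ℕ × ℚ) (_ : 0 < t.2 ∧ t.2 ≤ 1/4 ∧
          closedBall (c t.1) ((t.2:ℝ)) ⊆ U), closedBall (c t.1) ((t.2:ℝ)) := by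
        apply Set.Subset.antisymm
        · intro x hx
          obtain ⟨ε, hε, hεU⟩ := Metric.isOpen_iff.1 hU x hx
          set r := min (ε/3) (1/8 : ℝ) with hrdef
          have hr : 0 < r := lt_min (by linarith) (by norm_num)
          obtain ⟨i, hi⟩ := hc.exists_dist_lt x (show 0 < r/2 by linarith)
          obtain ⟨q, hq1, hq2⟩ := exists_rat_btwn (show (r/2 : ℝ) < r by linarith)
          have hq0 : 0 < q := by
            have : (0:ℝ) < q := lt_trans (by linarith) hq1
            exact_mod_cast this
          have hq4 : q ≤ 1/4 := by
            have h8 : (q:ℝ) ≤ 1/8 := le_trans hq2.le (min_le_right _ _)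
            have : (q:ℝ) ≤ ((1/4 : ℚ) : ℝ) := by push_cast; linarith
            exact_mod_cast this
          have hsub : closedBall (c i) ((q:ℝ)) ⊆ U := by
            intro y hy
            apply hεU
            simp only [mem_ball]
            have h1 : dist y (c i) ≤ q := hy
            have h2 : dist (c i) x < r/2 := by
              rw [dist_comm]; exact hi
            have h3 : (q:ℝ) < r := hq2
            have hrε : r ≤ ε/3 := min_le_left _ _
            calc dist y x ≤ dist y (c i) + dist (c i) x := dist_triangle _ _ _
            _ < q + r/2 := by linarith
            _ < ε := by linarith
          refine Set.mem_iUnion.2 ⟨(i, q), Set.mem_iUnion.2 ⟨⟨hq0, hq4, hsub⟩, ?_⟩⟩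
          simp only [mem_closedBall]
          linarith
        · intro x hx
          obtain ⟨t, ht⟩ := Set.mem_iUnion.1 hx
          obtain ⟨hcond, hmem⟩ := Set.mem_iUnion.1 ht
          exact hcond.2.2 hmem
      rw [hUdec]
      apply MeasurableSet.iUnion
      intro t
      apply MeasurableSet.iUnion
      rintro ⟨ht0, ht4, -⟩
      apply MeasurableSpace.measurableSet_generateFrom
      refine ⟨[(t.1, t.2)], by simp, ?_, testSet_single.symm⟩
      intro p hp
      simp only [List.mem_singleton] at hp
      subst hp
      exact ⟨ht0, ht4⟩
    · exact MeasurableSpace.generateFrom_le (fun S hS =>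
        (BorelSpace.measurable_eq (α := G)) ▸ hPmeas S hS)
  -- Step 3: localized π-system argument
  have hB0compact : ∀ i₀ : ℕ, IsCompact (testSet c [(i₀, (1/4 : ℚ))]) := by
    intro i₀
    rw [testSet_single]
    exact ball_compact hd hball _ (by norm_num)
  have H2 : ∀ i₀ : ℕ, μH ({g | u g ≠ 0} ∩ testSet c [(i₀, (1/4 : ℚ))]) = 0 := by
    intro i₀
    set L₀ : List (ℕ × ℚ) := [(i₀, (1/4 : ℚ))] with hL₀
    set B₀ : Set G := testSet c L₀ with hB₀
    have hB₀meas : MeasurableSet B₀ := isClosed_testSet.measurableSet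
    have hB₀fin : μH B₀ ≠ ∞ := (hB0compact i₀).measure_lt_top.ne
    -- computation of withDensity measures
    have hcomp : ∀ (v : G → ℝ), Measurable v → (∀ g, |v g| ≤ 1) → ∀ S : Set G, MeasurableSet S →
        ((μH.restrict B₀).withDensity fun g => ENNReal.ofReal (v g)) S
          = ENNReal.ofReal (∫ g in S ∩ B₀, max (v g) 0 ∂μH) := by
      intro v hv hvb S hS
      have hfin : μH (S ∩ B₀) ≠ ∞ :=
        (lt_of_le_of_lt (measure_mono Set.inter_subset_right) (hB0compact i₀).measure_lt_top).ne
      have hIntOn : IntegrableOn (fun g => max (v g) 0) (S ∩ B₀) μH := by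
        apply Measure.integrableOn_of_bounded hfin
          ((hv.max measurable_const).aestronglyMeasurable)
        refine ae_of_all _ fun g => ?_
        rw [Real.norm_eq_abs, abs_of_nonneg (le_max_right _ _)]
        exact max_le (le_trans (le_abs_self _) (hvb g)) zero_le_one
      rw [withDensity_apply _ hS, Measure.restrict_restrict hS]
      rw [ofReal_integral_eq_lintegral_ofReal hIntOn (ae_of_all _ fun g => le_max_right _ _)]
      congr 1
      ext g
      rcases le_total (v g) 0 with h | h
      · rw [max_eq_right h, ENNReal.ofReal_eq_zero.2 h, ENNReal.ofReal_zero]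
      · rw [max_eq_left h]
    set ν₁ : Measure G := (μH.restrict B₀).withDensity fun g => ENNReal.ofReal (u g) with hν₁
    set ν₂ : Measure G := (μH.restrict B₀).withDensity fun g => ENNReal.ofReal (-(u g)) with hν₂
    have hub' : ∀ g, |(-(u g))| ≤ 1 := fun g => by rw [abs_neg]; exact hub g
    haveI : IsFiniteMeasure ν₁ := by
      constructor
      rw [hν₁, hcomp u hu hub Set.univ MeasurableSet.univ]
      exact ENNReal.ofReal_lt_top
    haveI : IsFiniteMeasure ν₂ := by
      constructor
      rw [hν₂, hcomp (fun g => -(u g)) hu.neg hub' Set.univ MeasurableSet.univ]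
      exact ENNReal.ofReal_lt_top
    -- integrability on pieces
    have hIntAux : ∀ S : Set G, MeasurableSet S → IntegrableOn u (S ∩ B₀) μH := by
      intro S hS
      have hfin : μH (S ∩ B₀) ≠ ∞ :=
        (lt_of_le_of_lt (measure_mono Set.inter_subset_right) (hB0compact i₀).measure_lt_top).ne
      apply Measure.integrableOn_of_bounded hfin hu.aestronglyMeasurable
      exact ae_of_all _ fun g => by rw [Real.norm_eq_abs]; exact hub g
    -- key computation : difference of the two integrals is the integral of u
    have hdiff : ∀ S : Set G, MeasurableSet S →
        (∫ g in S ∩ B₀, max (u g) 0 ∂μH) - (∫ g in S ∩ B₀, max (-(u g)) 0 ∂μH)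
          = ∫ g in S ∩ B₀, u g ∂μH := by
      intro S hS
      have hfin : μH (S ∩ B₀) ≠ ∞ :=
        (lt_of_le_of_lt (measure_mono Set.inter_subset_right) (hB0compact i₀).measure_lt_top).ne
      have h1 : IntegrableOn (fun g => max (u g) 0) (S ∩ B₀) μH := by
        apply Measure.integrableOn_of_bounded hfin ((hu.max measurable_const).aestronglyMeasurable)
        refine ae_of_all _ fun g => ?_
        rw [Real.norm_eq_abs, abs_of_nonneg (le_max_right _ _)]
        exact max_le (le_trans (le_abs_self _) (hub g)) zero_le_one
      have h2 : IntegrableOn (fun g => max (-(u g)) 0) (S ∩ B₀) μH := by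
        apply Measure.integrableOn_of_bounded hfin
          ((hu.neg.max measurable_const).aestronglyMeasurable)
        refine ae_of_all _ fun g => ?_
        rw [Real.norm_eq_abs, abs_of_nonneg (le_max_right _ _)]
        exact max_le (le_trans (le_abs_self _) (hub' g)) zero_le_one
      rw [← integral_sub h1 h2]
      congr 1
      ext g
      rcases le_total (u g) 0 with h | h
      · rw [max_eq_right h, max_eq_left (by linarith)]; ring
      · rw [max_eq_left h, max_eq_right (by linarith)]; ring
    -- agreement on P
    have hagree : ∀ S ∈ P, ν₁ S = ν₂ S := by
      rintro S ⟨L, hL, hLv, rfl⟩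
      have hSm : MeasurableSet (testSet c L) := isClosed_testSet.measurableSet
      rw [hν₁, hν₂, hcomp u hu hub _ hSm, hcomp (fun g => -(u g)) hu.neg hub' _ hSm]
      have hint0 : ∫ g in testSet c L ∩ B₀, u g ∂μH = 0 := by
        rw [hB₀, ← testSet_append]
        apply H1 _ (by simp [hL])
        intro p hp
        rcases List.mem_append.1 hp with h | h
        · exact hLv p h
        · simp only [hL₀, List.mem_singleton] at h
          subst h
          norm_num
      have := hdiff (testSet c L) hSm
      rw [hint0] at this
      congr 1
      linarith
    have huniveq : ν₁ Set.univ = ν₂ Set.univ := by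
      rw [hν₁, hν₂, hcomp u hu hub _ MeasurableSet.univ, hcomp (fun g => -(u g)) hu.neg hub' _ MeasurableSet.univ]
      have hint0 : ∫ g in Set.univ ∩ B₀, u g ∂μH = 0 := by
        rw [Set.univ_inter, hB₀]
        apply H1 _ (by simp [hL₀])
        intro p hp
        simp only [hL₀, List.mem_singleton] at hp
        subst hp
        norm_num
      have := hdiff Set.univ MeasurableSet.univ
      rw [hint0] at this
      congr 1
      linarith
    have hνeq : ν₁ = ν₂ := ext_of_generate_finite P hgen hPi hagree huniveq
    -- extraction : for every measurable S, ∫_{S ∩ B₀} u = 0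
    have hE : ∀ S : Set G, MeasurableSet S → ∫ g in S ∩ B₀, u g ∂μH = 0 := by
      intro S hS
      have h1 := hcomp u hu hub S hS
      have h2 := hcomp (fun g => -(u g)) hu.neg hub' S hS
      rw [← hν₁] at h1
      rw [← hν₂] at h2
      rw [hνeq, h2] at h1
      have ha : (0:ℝ) ≤ ∫ g in S ∩ B₀, max (u g) 0 ∂μH :=
        integral_nonneg fun g => le_max_right _ _
      have hb : (0:ℝ) ≤ ∫ g in S ∩ B₀, max (-(u g)) 0 ∂μH :=
        integral_nonneg fun g => le_max_right _ _
      have heq := ((ENNReal.ofReal_eq_ofReal_iff hb ha).1 h1).symm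
      rw [← hdiff S hS, heq]
      ring
    -- conclude u = 0 a.e. on B₀
    have hSplus : MeasurableSet {g | 0 < u g} := measurableSet_lt measurable_const hu
    have hSminus : MeasurableSet {g | u g < 0} := measurableSet_lt hu measurable_const
    have hzero : ∀ (S : Set G), MeasurableSet S → (∀ g ∈ S, 0 < u g ∨ u g < 0) →
        (∀ g ∈ S ∩ B₀, 0 ≤ u g) ∨ (∀ g ∈ S ∩ B₀, u g ≤ 0) → μH (S ∩ B₀) = 0 := by
      intro S hS hne hsign
      have hfin : μH (S ∩ B₀) ≠ ∞ :=
        (lt_of_le_of_lt (measure_mono Set.inter_subset_right) (hB0compact i₀).measure_lt_top).ne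
      have hint := hIntAux S hS
      have hmeas : MeasurableSet (S ∩ B₀) := hS.inter hB₀meas
      rcases hsign with hpos | hneg
      · have hnn : 0 ≤ᵐ[μH.restrict (S ∩ B₀)] u :=
          (ae_restrict_iff' hmeas).2 (ae_of_all _ hpos)
        have := (integral_eq_zero_iff_of_nonneg_ae hnn hint).1 (hE S hS)
        -- u = 0 a.e. on S ∩ B₀, but u ≠ 0 pointwise on S
        have h0 : (μH.restrict (S ∩ B₀)) {g | u g ≠ 0} = 0 := by
          rw [Filter.EventuallyEq, ae_iff] at this
          exact this
        have hns : MeasurableSet {g : G | u g ≠ 0} := by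
          have heq : {g : G | u g ≠ 0} = {g : G | u g = 0}ᶜ := rfl
          rw [heq]
          exact (measurableSet_eq_fun hu measurable_const).compl
        rw [Measure.restrict_apply hns] at h0
        have hsub : S ∩ B₀ ⊆ {g | u g ≠ 0} := by
          intro g hg
          rcases hne g hg.1 with h | h
          · exact ne_of_gt h
          · exact ne_of_lt h
        rwa [Set.inter_eq_self_of_subset_right hsub] at h0
      · have hnn : 0 ≤ᵐ[μH.restrict (S ∩ B₀)] (fun g => -(u g)) :=
          (ae_restrict_iff' hmeas).2 (ae_of_all _ fun g hg => by
            simpa using hneg g hg)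
        have hE' : ∫ g in S ∩ B₀, -(u g) ∂μH = 0 := by
          rw [integral_neg, hE S hS, neg_zero]
        have := (integral_eq_zero_iff_of_nonneg_ae hnn hint.neg).1 hE'
        have h0 : (μH.restrict (S ∩ B₀)) {g | u g ≠ 0} = 0 := by
          rw [Filter.EventuallyEq, ae_iff] at this
          simp only [Pi.zero_apply, neg_eq_zero] at this
          exact this
        have hns : MeasurableSet {g : G | u g ≠ 0} := by
          have heq : {g : G | u g ≠ 0} = {g : G | u g = 0}ᶜ := rfl
          rw [heq]
          exact (measurableSet_eq_fun hu measurable_const).compl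
        rw [Measure.restrict_apply hns] at h0
        have hsub : S ∩ B₀ ⊆ {g | u g ≠ 0} := by
          intro g hg
          rcases hne g hg.1 with h | h
          · exact ne_of_gt h
          · exact ne_of_lt h
        rwa [Set.inter_eq_self_of_subset_right hsub] at h0
    have hplus0 : μH ({g | 0 < u g} ∩ B₀) = 0 :=
      hzero _ hSplus (fun g hg => Or.inl hg) (Or.inl (fun g hg => le_of_lt hg.1))
    have hminus0 : μH ({g | u g < 0} ∩ B₀) = 0 :=
      hzero _ hSminus (fun g hg => Or.inr hg) (Or.inr (fun g hg => le_of_lt hg.1))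
    have hsplit : {g | u g ≠ 0} ∩ B₀ ⊆ ({g | 0 < u g} ∩ B₀) ∪ ({g | u g < 0} ∩ B₀) := by
      rintro g ⟨hg, hgB⟩
      rcases lt_or_gt_of_ne hg with h | h
      · exact Or.inr ⟨h, hgB⟩
      · exact Or.inl ⟨h, hgB⟩
    refine le_antisymm ?_ zero_le
    calc μH ({g | u g ≠ 0} ∩ B₀)
        ≤ μH (({g | 0 < u g} ∩ B₀) ∪ ({g | u g < 0} ∩ B₀)) := measure_mono hsplit
    _ ≤ μH ({g | 0 < u g} ∩ B₀) + μH ({g | u g < 0} ∩ B₀) := measure_union_le _ _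
    _ = 0 := by rw [hplus0, hminus0, add_zero]

  -- Step 4: cover G by the balls
  rw [ae_iff]
  have hcover : {g | ¬ u g = 0} ⊆ ⋃ i : ℕ, ({g | u g ≠ 0} ∩ testSet c [(i, (1/4 : ℚ))]) := by
    intro g hg
    obtain ⟨i, hi⟩ := hc.exists_dist_lt g (show (0:ℝ) < 1/4 by norm_num)
    refine Set.mem_iUnion.2 ⟨i, hg, ?_⟩
    rw [testSet_single]
    simp only [mem_closedBall]
    push_cast
    linarith
  exact measure_mono_null hcover (measure_iUnion_null H2)

end Grp

section Phi
variable {G : Type} [MetricSpace G] [Group G] [IsTopologicalGroup G]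
    [PolishSpace G] [LocallyCompactSpace G] [MeasurableSpace G] [BorelSpace G]

/-- The validity condition for a test-function index. -/
def validT (t : List (ℕ × ℚ) × ℕ) : Prop :=
  t.1 ≠ [] ∧ 4 ≤ t.2 ∧ ∀ p ∈ t.1, 0 < p.2 ∧ p.2 ≤ 1/4

/-- Scaling constant. -/
noncomputable def scaleC (μH : Measure G) (c : ℕ → G) (t : List (ℕ × ℚ) × ℕ) : ℝ :=
  (1 + 2 * t.2 * (μH (closedBall (c t.1.headI.1) 1)).toReal)⁻¹

/-- The main coordinate functions. -/
noncomputable def PhiF {X : Type} (μH : Measure G) (c : ℕ → G) (f : X → ℝ) (a : G → X → X)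
    (x : X) (t : List (ℕ × ℚ) × ℕ) (h : G) : ℝ :=
  if validT t then
    scaleC μH c t * ∫ g, f (a g x) * tentMin c t.2 t.1 (h * g⁻¹) ∂(μH.inv)
  else 0

lemma integral_inv_measure (μH : Measure G) (w : G → ℝ) :
    ∫ g, w g ∂μH.inv = ∫ g, w g⁻¹ ∂μH := by
  rw [Measure.inv_def]
  exact integral_map_equiv (MeasurableEquiv.inv G) w

lemma translate_image_inv_measure (μH : Measure G) [μH.IsHaarMeasure] (h : G) (S : Set G) :
    μH.inv ((fun k => k⁻¹ * h) '' S) = μH S := by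
  rw [Measure.inv_apply]
  have himg : ((fun k => k⁻¹ * h) '' S)⁻¹ = (fun y => h * y) ⁻¹' S := by
    ext y
    simp only [Set.mem_inv, Set.mem_image, Set.mem_preimage]
    constructor
    · rintro ⟨k, hk, hke⟩
      have h2 : h⁻¹ * k = y := by
        have := congrArg Inv.inv hke
        simpa [mul_inv_rev] using this
      have h3 : k = h * y := by rw [← h2]; group
      rwa [← h3]
    · intro hy
      exact ⟨h * y, hy, by group⟩
  rw [himg]
  exact measure_preimage_mul μH h S

variable (μH : Measure G) [μH.IsHaarMeasure]
  (c : ℕ → G)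
  {X : Type} [MeasurableSpace X]
  (f : X → ℝ)
  (a : G → X → X)

/-- Support of the translated test function. -/
lemma support_aux {t : List (ℕ × ℚ) × ℕ} (hval : validT t) (x : X) (h g : G)
    (hne : f (a g x) * tentMin c t.2 t.1 (h * g⁻¹) ≠ 0) :
    g ∈ (fun k => k⁻¹ * h) '' closedBall (c t.1.headI.1) (1/2) := by
  obtain ⟨p, L', hL⟩ := List.exists_cons_of_ne_nil hval.1
  have htm : tentMin c t.2 t.1 (h * g⁻¹) ≠ 0 := fun h0 => hne (by rw [h0, mul_zero])
  have hmem := tentMin_support hL (hval.2.2 p (by simp [hL])).2 hval.2.1 htm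
  have hmem' : h * g⁻¹ ∈ closedBall (c t.1.headI.1) (1/2 : ℝ) := by
    rw [hL]
    simpa using hmem
  exact ⟨h * g⁻¹, hmem', by group⟩

lemma integrable_aux (hd : ∀ g h k : G, dist (g * k) (h * k) = dist g h)
    (hball : IsCompact {g : G | dist g 1 ≤ 1})
    (hf : Measurable f) (hf01 : ∀ x, f x ∈ Set.Icc (0:ℝ) 1)
    (hameas : Measurable fun p : G × X => a p.1 p.2)
    {t : List (ℕ × ℚ) × ℕ} (hval : validT t) (x : X) (h : G) :
    Integrable (fun g => f (a g x) * tentMin c t.2 t.1 (h * g⁻¹)) μH.inv := by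
  set K := closedBall (c t.1.headI.1) (1/2 : ℝ) with hK
  have hKc : IsCompact K := ball_compact hd hball _ (by norm_num)
  set T := (fun k => k⁻¹ * h) '' K with hT
  have hTc : IsCompact T := hKc.image (by continuity)
  have hTfin : μH.inv T ≠ ∞ := by
    rw [translate_image_inv_measure]
    exact hKc.measure_lt_top.ne
  have hmeas : Measurable (fun g => f (a g x) * tentMin c t.2 t.1 (h * g⁻¹)) := by
    apply Measurable.mul
    · exact hf.comp (hameas.comp ((measurable_id.prodMk measurable_const)))
    · exact tentMin_continuous.measurable.comp
        ((continuous_const.mul continuous_inv).measurable)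
  have heq : (fun g => f (a g x) * tentMin c t.2 t.1 (h * g⁻¹))
      = T.indicator (fun g => f (a g x) * tentMin c t.2 t.1 (h * g⁻¹)) := by
    ext g
    by_cases hg : g ∈ T
    · rw [Set.indicator_of_mem hg]
    · rw [Set.indicator_of_notMem hg]
      by_contra hne
      exact hg (support_aux c f a hval x h g hne)
  rw [heq, integrable_indicator_iff hTc.measurableSet]
  apply Measure.integrableOn_of_bounded hTfin hmeas.aestronglyMeasurable
  refine ae_of_all _ fun g => ?_
  rw [Real.norm_eq_abs, abs_mul]
  calc |f (a g x)| * |tentMin c t.2 t.1 (h * g⁻¹)| ≤ 1 * 1 := by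
        apply mul_le_mul _ _ (abs_nonneg _) zero_le_one
        · rw [abs_of_nonneg (hf01 (a g x)).1]; exact (hf01 (a g x)).2
        · rw [abs_of_nonneg tentMin_nonneg]; exact tentMin_le_one
  _ = 1 := one_mul 1

lemma scaleC_pos (t : List (ℕ × ℚ) × ℕ) : 0 < scaleC μH c t := by
  have h0 : (0:ℝ) ≤ (μH (closedBall (c t.1.headI.1) 1)).toReal := ENNReal.toReal_nonneg
  have : (0:ℝ) < 1 + 2 * t.2 * (μH (closedBall (c t.1.headI.1) 1)).toReal := by positivity
  exact inv_pos.2 this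

lemma PhiF_mem_Icc (hd : ∀ g h k : G, dist (g * k) (h * k) = dist g h)
    (hball : IsCompact {g : G | dist g 1 ≤ 1})
    (hf : Measurable f) (hf01 : ∀ x, f x ∈ Set.Icc (0:ℝ) 1)
    (hameas : Measurable fun p : G × X => a p.1 p.2)
    (x : X) (t : List (ℕ × ℚ) × ℕ) (h : G) :
    PhiF μH c f a x t h ∈ Set.Icc (0:ℝ) 1 := by
  by_cases hval : validT t
  · rw [PhiF, if_pos hval]
    set K := closedBall (c t.1.headI.1) (1/2 : ℝ) with hK
    have hKc : IsCompact K := ball_compact hd hball _ (by norm_num)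
    set T := (fun k => k⁻¹ * h) '' K with hT
    have hTc : IsCompact T := hKc.image (by continuity)
    have hTval : μH.inv T = μH K := translate_image_inv_measure μH h K
    have hTfin : μH.inv T ≠ ∞ := by rw [hTval]; exact hKc.measure_lt_top.ne
    set V : ℝ := (μH (closedBall (c t.1.headI.1) 1)).toReal with hV
    have hV0 : 0 ≤ V := ENNReal.toReal_nonneg
    have hInn : 0 ≤ ∫ g, f (a g x) * tentMin c t.2 t.1 (h * g⁻¹) ∂μH.inv :=
      integral_nonneg fun g => mul_nonneg (hf01 _).1 tentMin_nonneg
    constructor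
    · exact mul_nonneg (scaleC_pos μH c t).le hInn
    · have hIle : (∫ g, f (a g x) * tentMin c t.2 t.1 (h * g⁻¹) ∂μH.inv)
          ≤ (μH.inv T).toReal := by
        have hind : Integrable (T.indicator fun _ => (1:ℝ)) μH.inv := by
          rw [integrable_indicator_iff hTc.measurableSet]
          exact (integrableOn_const_iff).2 (Or.inr hTfin.lt_top)
        calc (∫ g, f (a g x) * tentMin c t.2 t.1 (h * g⁻¹) ∂μH.inv)
            ≤ ∫ g, T.indicator (fun _ => (1:ℝ)) g ∂μH.inv := by
              apply integral_mono (integrable_aux μH c f a hd hball hf hf01 hameas hval x h) hind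
              intro g
              by_cases hg : g ∈ T
              · rw [Set.indicator_of_mem hg]
                calc f (a g x) * tentMin c t.2 t.1 (h * g⁻¹) ≤ 1 * 1 :=
                      mul_le_mul (hf01 _).2 tentMin_le_one tentMin_nonneg zero_le_one
                _ = 1 := one_mul 1
              · rw [Set.indicator_of_notMem hg]
                by_contra hc0
                push_neg at hc0
                exact hg (support_aux c f a hval x h g (by intro h0; rw [h0] at hc0; simp at hc0))
        _ = (μH.inv T).toReal := by
              rw [integral_indicator_const _ hTc.measurableSet]
              simp [Measure.real_def]
      have hKV : (μH.inv T).toReal ≤ V := by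
        rw [hTval, hV]
        apply ENNReal.toReal_mono (ball_compact hd hball (c t.1.headI.1)
          (le_refl (1:ℝ))).measure_lt_top.ne
        exact measure_mono (closedBall_subset_closedBall (by norm_num))
      have hm4 : (4:ℝ) ≤ t.2 := by exact_mod_cast hval.2.1
      calc scaleC μH c t * ∫ g, f (a g x) * tentMin c t.2 t.1 (h * g⁻¹) ∂μH.inv
          ≤ scaleC μH c t * V := by
            apply mul_le_mul_of_nonneg_left (le_trans hIle hKV) (scaleC_pos μH c t).le
      _ ≤ 1 := by
            rw [scaleC, inv_mul_eq_div, div_le_one (by positivity)]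
            nlinarith
  · rw [PhiF, if_neg hval]
    exact ⟨le_refl 0, zero_le_one⟩

lemma PhiF_lipschitz (hd : ∀ g h k : G, dist (g * k) (h * k) = dist g h)
    (hball : IsCompact {g : G | dist g 1 ≤ 1})
    (hf : Measurable f) (hf01 : ∀ x, f x ∈ Set.Icc (0:ℝ) 1)
    (hameas : Measurable fun p : G × X => a p.1 p.2)
    (x : X) (t : List (ℕ × ℚ) × ℕ) :
    LipschitzWith 1 (PhiF μH c f a x t) := by
  by_cases hval : validT t
  · apply LipschitzWith.of_dist_le_mul
    intro h h'
    simp only [PhiF, if_pos hval, NNReal.coe_one, one_mul]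
    set K := closedBall (c t.1.headI.1) (1/2 : ℝ) with hK
    have hKc : IsCompact K := ball_compact hd hball _ (by norm_num)
    set T := (fun k => k⁻¹ * h) '' K with hT
    set T' := (fun k => k⁻¹ * h') '' K with hT'
    have hTc : IsCompact T := hKc.image (by continuity)
    have hT'c : IsCompact T' := hKc.image (by continuity)
    have hTval : μH.inv T = μH K := translate_image_inv_measure μH h K
    have hT'val : μH.inv T' = μH K := translate_image_inv_measure μH h' K
    set V : ℝ := (μH (closedBall (c t.1.headI.1) 1)).toReal with hV
    have hV0 : 0 ≤ V := ENNReal.toReal_nonneg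
    have hKfin : μH K ≠ ∞ := hKc.measure_lt_top.ne
    have hKV : (μH K).toReal ≤ V := by
      apply ENNReal.toReal_mono (ball_compact hd hball (c t.1.headI.1)
        (le_refl (1:ℝ))).measure_lt_top.ne
      exact measure_mono (closedBall_subset_closedBall (by norm_num))
    have hint1 := integrable_aux μH c f a hd hball hf hf01 hameas hval x h
    have hint2 := integrable_aux μH c f a hd hball hf hf01 hameas hval x h'
    rw [Real.dist_eq, ← mul_sub, abs_mul,
      abs_of_nonneg (scaleC_pos μH c t).le, ← integral_sub hint1 hint2]
    -- bound the integral of the difference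
    have hptw : ∀ g, ‖f (a g x) * tentMin c t.2 t.1 (h * g⁻¹)
          - f (a g x) * tentMin c t.2 t.1 (h' * g⁻¹)‖
        ≤ (T ∪ T').indicator (fun _ => (t.2 : ℝ) * dist h h') g := by
      intro g
      by_cases hg : g ∈ T ∪ T'
      · rw [Set.indicator_of_mem hg]
        rw [← mul_sub, Real.norm_eq_abs, abs_mul]
        have h1 : |f (a g x)| ≤ 1 := by
          rw [abs_of_nonneg (hf01 _).1]; exact (hf01 _).2
        have h2 : |tentMin c t.2 t.1 (h * g⁻¹) - tentMin c t.2 t.1 (h' * g⁻¹)|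
            ≤ (t.2 : ℝ) * dist h h' := by
          have := (tentMin_lipschitz (c := c) (m := t.2) (L := t.1)).dist_le_mul
            (h * g⁻¹) (h' * g⁻¹)
          rw [Real.dist_eq] at this
          rw [hd h h' g⁻¹] at this
          exact this
        calc |f (a g x)| * |tentMin c t.2 t.1 (h * g⁻¹) - tentMin c t.2 t.1 (h' * g⁻¹)|
            ≤ 1 * ((t.2 : ℝ) * dist h h') := by
              apply mul_le_mul h1 h2 (abs_nonneg _) zero_le_one
        _ = (t.2 : ℝ) * dist h h' := one_mul _
      · rw [Set.indicator_of_notMem hg]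
        have hg1 : g ∉ T := fun hh => hg (Set.mem_union_left _ hh)
        have hg2 : g ∉ T' := fun hh => hg (Set.mem_union_right _ hh)
        have hz1 : f (a g x) * tentMin c t.2 t.1 (h * g⁻¹) = 0 := by
          by_contra h0
          exact hg1 (support_aux c f a hval x h g h0)
        have hz2 : f (a g x) * tentMin c t.2 t.1 (h' * g⁻¹) = 0 := by
          by_contra h0
          exact hg2 (support_aux c f a hval x h' g h0)
        rw [hz1, hz2, sub_zero, norm_zero]
    have hindint : Integrable ((T ∪ T').indicator fun _ => (t.2 : ℝ) * dist h h') μH.inv := by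
      rw [integrable_indicator_iff (hTc.union hT'c).measurableSet]
      apply (integrableOn_const_iff).2 (Or.inr _)
      calc μH.inv (T ∪ T') ≤ μH.inv T + μH.inv T' := measure_union_le _ _
      _ = μH K + μH K := by rw [hTval, hT'val]
      _ < ∞ := by
          rw [ENNReal.add_lt_top]
          exact ⟨hKfin.lt_top, hKfin.lt_top⟩
    have hbnd := norm_integral_le_of_norm_le hindint (ae_of_all _ hptw)
    have hTTfin : μH.inv (T ∪ T') ≠ ∞ := by
      apply ne_of_lt
      calc μH.inv (T ∪ T') ≤ μH.inv T + μH.inv T' := measure_union_le _ _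
      _ = μH K + μH K := by rw [hTval, hT'val]
      _ < ∞ := by
          rw [ENNReal.add_lt_top]
          exact ⟨hKfin.lt_top, hKfin.lt_top⟩
    have hTTle : (μH.inv (T ∪ T')).toReal ≤ 2 * V := by
      have h1 : μH.inv (T ∪ T') ≤ μH K + μH K := by
        calc μH.inv (T ∪ T') ≤ μH.inv T + μH.inv T' := measure_union_le _ _
        _ = μH K + μH K := by rw [hTval, hT'val]
      have h2 := ENNReal.toReal_mono (by
        rw [ENNReal.add_ne_top]; exact ⟨hKfin, hKfin⟩) h1
      rw [ENNReal.toReal_add hKfin hKfin] at h2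
      linarith
    have hindval : (∫ g, (T ∪ T').indicator (fun _ => (t.2 : ℝ) * dist h h') g ∂μH.inv)
        = (μH.inv (T ∪ T')).toReal * ((t.2 : ℝ) * dist h h') := by
      rw [integral_indicator_const _ (hTc.union hT'c).measurableSet]
      simp [smul_eq_mul, Measure.real_def]
    have hm4 : (4:ℝ) ≤ t.2 := by exact_mod_cast hval.2.1
    have hd0 : (0:ℝ) ≤ dist h h' := dist_nonneg
    calc scaleC μH c t * |∫ g, (f (a g x) * tentMin c t.2 t.1 (h * g⁻¹)
            - f (a g x) * tentMin c t.2 t.1 (h' * g⁻¹)) ∂μH.inv|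
        ≤ scaleC μH c t * ((μH.inv (T ∪ T')).toReal * ((t.2 : ℝ) * dist h h')) := by
          apply mul_le_mul_of_nonneg_left _ (scaleC_pos μH c t).le
          rw [← Real.norm_eq_abs]
          rw [hindval] at hbnd
          exact hbnd
    _ ≤ scaleC μH c t * ((2 * V) * ((t.2 : ℝ) * dist h h')) := by
          apply mul_le_mul_of_nonneg_left _ (scaleC_pos μH c t).le
          apply mul_le_mul_of_nonneg_right hTTle (by positivity)
    _ ≤ dist h h' := by
          rw [scaleC, inv_mul_eq_div, div_le_iff₀ (by positivity)]
          nlinarith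
  · have h0 : PhiF μH c f a x t = fun _ => (0:ℝ) := by
      funext h
      rw [PhiF, if_neg hval]
    rw [h0]
    exact LipschitzWith.const' 0

lemma PhiF_measurable (hf : Measurable f)
    (hameas : Measurable fun p : G × X => a p.1 p.2)
    (t : List (ℕ × ℚ) × ℕ) (h : G) :
    Measurable (fun x => PhiF μH c f a x t h) := by
  by_cases hval : validT t
  · simp only [PhiF, if_pos hval]
    apply Measurable.const_mul
    have hjoint : Measurable (fun p : X × G =>
        f (a p.2 p.1) * tentMin c t.2 t.1 (h * p.2⁻¹)) := by
      apply Measurable.mul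
      · exact hf.comp (hameas.comp measurable_swap)
      · exact tentMin_continuous.measurable.comp ((measurable_snd.inv).const_mul h)
    exact (hjoint.stronglyMeasurable.integral_prod_right').measurable
  · simp only [PhiF, if_neg hval]
    exact measurable_const

lemma PhiF_equivariant (hmul : ∀ g h x, a (g * h) x = a g (a h x))
    (g : G) (x : X) (t : List (ℕ × ℚ) × ℕ) (h : G) :
    PhiF μH c f a (a g x) t h = PhiF μH c f a x t (h * g) := by
  by_cases hval : validT t
  · simp only [PhiF, if_pos hval]
    congr 1
    have hsub : ∫ k, f (a k (a g x)) * tentMin c t.2 t.1 (h * k⁻¹) ∂μH.inv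
        = ∫ k, f (a (k * g⁻¹) (a g x)) * tentMin c t.2 t.1 (h * (k * g⁻¹)⁻¹) ∂μH.inv := by
      conv_lhs => rw [← map_mul_right_eq_self μH.inv g⁻¹]
      exact integral_map_equiv (MeasurableEquiv.mulRight g⁻¹)
        (fun k => f (a k (a g x)) * tentMin c t.2 t.1 (h * k⁻¹))
    rw [hsub]
    congr 1
    funext k
    have h1 : a (k * g⁻¹) (a g x) = a k x := by
      rw [← hmul]
      congr 1
      group
    have h2 : h * (k * g⁻¹)⁻¹ = h * g * k⁻¹ := by group
    rw [h1, h2]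
  · simp only [PhiF, if_neg hval]

lemma PhiF_injective (hd : ∀ g h k : G, dist (g * k) (h * k) = dist g h)
    (hball : IsCompact {g : G | dist g 1 ≤ 1})
    (hc : DenseRange c)
    (hf : Measurable f) (hfinj : Function.Injective f)
    (hf01 : ∀ x, f x ∈ Set.Icc (0:ℝ) 1)
    (hameas : Measurable fun p : G × X => a p.1 p.2)
    (hid : ∀ x, a 1 x = x) (hmul : ∀ g h x, a (g * h) x = a g (a h x))
    {x y : X} (hxy : ∀ (t : List (ℕ × ℚ) × ℕ) (h : G),
      PhiF μH c f a x t h = PhiF μH c f a y t h) :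
    x = y := by
  set u : G → ℝ := fun g => f (a g⁻¹ x) - f (a g⁻¹ y) with hu_def
  have hux : Measurable (fun g : G => f (a g⁻¹ x)) :=
    hf.comp (hameas.comp (measurable_inv.prodMk measurable_const))
  have huy : Measurable (fun g : G => f (a g⁻¹ y)) :=
    hf.comp (hameas.comp (measurable_inv.prodMk measurable_const))
  have hu : Measurable u := hux.sub huy
  have hub : ∀ g, |u g| ≤ 1 := by
    intro g
    have h1 := hf01 (a g⁻¹ x)
    have h2 := hf01 (a g⁻¹ y)
    rw [hu_def, abs_sub_le_iff]
    constructor <;> simp only [Set.mem_Icc] at h1 h2 <;> linarith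
  have hint : ∀ (L : List (ℕ × ℚ)) (m : ℕ), L ≠ [] → 4 ≤ m →
      (∀ p ∈ L, 0 < p.2 ∧ p.2 ≤ 1/4) →
      ∫ g, u g * tentMin c m L g ∂μH = 0 := by
    intro L m hL hm hLv
    have hval : validT (L, m) := ⟨hL, hm, hLv⟩
    have hkey := hxy (L, m) 1
    simp only [PhiF, if_pos hval] at hkey
    have hs := (scaleC_pos μH c (L, m)).ne'
    have hIeq : ∫ g, f (a g x) * tentMin c m L (1 * g⁻¹) ∂μH.inv
        = ∫ g, f (a g y) * tentMin c m L (1 * g⁻¹) ∂μH.inv :=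
      mul_left_cancel₀ hs hkey
    have hIx : ∫ g, f (a g x) * tentMin c m L (1 * g⁻¹) ∂μH.inv
        = ∫ g, f (a g⁻¹ x) * tentMin c m L g ∂μH := by
      rw [integral_inv_measure]
      congr 1
      funext g
      simp
    have hIy : ∫ g, f (a g y) * tentMin c m L (1 * g⁻¹) ∂μH.inv
        = ∫ g, f (a g⁻¹ y) * tentMin c m L g ∂μH := by
      rw [integral_inv_measure]
      congr 1
      funext g
      simp
    have hintx : Integrable (fun g => f (a g⁻¹ x) * tentMin c m L g) μH := by
      have h0 := integrable_aux μH c f a hd hball hf hf01 hameas hval x 1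
      rw [Measure.inv_def] at h0
      have h1 := (integrable_map_equiv (MeasurableEquiv.inv G)
        (fun g => f (a g x) * tentMin c m L (1 * g⁻¹))).1 h0
      apply h1.congr
      refine ae_of_all _ fun g => ?_
      simp [Function.comp]
    have hinty : Integrable (fun g => f (a g⁻¹ y) * tentMin c m L g) μH := by
      have h0 := integrable_aux μH c f a hd hball hf hf01 hameas hval y 1
      rw [Measure.inv_def] at h0
      have h1 := (integrable_map_equiv (MeasurableEquiv.inv G)
        (fun g => f (a g y) * tentMin c m L (1 * g⁻¹))).1 h0
      apply h1.congr
      refine ae_of_all _ fun g => ?_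
      simp [Function.comp]
    have : ∫ g, u g * tentMin c m L g ∂μH
        = (∫ g, f (a g⁻¹ x) * tentMin c m L g ∂μH)
          - ∫ g, f (a g⁻¹ y) * tentMin c m L g ∂μH := by
      rw [← integral_sub hintx hinty]
      congr 1
      funext g
      rw [hu_def]
      ring
    rw [this, ← hIx, ← hIy, hIeq]
    ring
  have hae := key_zero hd hball μH c hc u hu hub hint
  have hμne : (MeasureTheory.ae μH).NeBot := by
    apply ae_neBot.2
    intro h0
    have h1 : μH Set.univ ≠ 0 := (isOpen_univ.measure_ne_zero μH ⟨1, trivial⟩)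
    rw [h0] at h1
    simp at h1
  obtain ⟨g₀, hg₀⟩ := hae.exists
  have hfe : f (a g₀⁻¹ x) = f (a g₀⁻¹ y) := by
    rw [hu_def] at hg₀
    simp only [sub_eq_zero] at hg₀
    exact hg₀
  have hxy' : a g₀⁻¹ x = a g₀⁻¹ y := hfinj hfe
  have hback : ∀ z : X, a g₀ (a g₀⁻¹ z) = z := by
    intro z
    rw [← hmul]
    simp only [mul_inv_cancel]
    exact hid z
  calc x = a g₀ (a g₀⁻¹ x) := (hback x).symm
  _ = a g₀ (a g₀⁻¹ y) := by rw [hxy']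
  _ = y := hback y

end Phi

/-- `Lip(G,[0,1])^ω` (with the shift action `(g ⬝ F) n h = F n (h g)`) is
model-universal: every free measure-preserving Borel `G`-system `(X,μ)` on a standard
Lebesgue space is isomorphic to `(Lip(G,[0,1])^ω, ν)` for some invariant probability
measure `ν`. -/
theorem lipSeq_model_universal {G : Type} [MetricSpace G] [Group G] [IsTopologicalGroup G]
    [PolishSpace G] [LocallyCompactSpace G] [NoncompactSpace G]
    [MeasurableSpace G] [BorelSpace G]
    (hd : ∀ g h k : G, dist (g * k) (h * k) = dist g h)
    (hball : IsCompact {g : G | dist g 1 ≤ 1})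
    (X : Type) [MeasurableSpace X] [StandardBorelSpace X]
    (μ : Measure X) [IsProbabilityMeasure μ]
    (a : G → X → X) (hid : ∀ x, a 1 x = x)
    (hmul : ∀ g h x, a (g * h) x = a g (a h x))
    (hameas : Measurable fun p : G × X => a p.1 p.2)
    (hpres : ∀ g, MeasurePreserving (a g) μ μ)
    (hfree : μ {x | ∀ g : G, g ≠ 1 → a g x ≠ x} = 1) :
    ∃ ν : Measure (LipSeq G),
      IsProbabilityMeasure ν ∧
      (∀ (g : G) (m : LipSeq G → LipSeq G),
        (∀ F, (m F).1 = fun n h => F.1 n (h * g)) → MeasurePreserving m ν ν) ∧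
      ∃ (X' : Set X) (φ : X → LipSeq G),
        MeasurableSet X' ∧ μ X' = 1 ∧ (∀ g : G, ∀ x ∈ X', a g x ∈ X') ∧
        Measurable φ ∧ Set.InjOn φ X' ∧
        (∀ g : G, ∀ x ∈ X', (φ (a g x)).1 = fun n h => (φ x).1 n (h * g)) ∧
        Measure.map φ μ = ν := by
  classical
  have hGne : Nonempty G := ⟨1⟩
  obtain ⟨c, hc⟩ := TopologicalSpace.exists_dense_seq G
  set μH : Measure G := MeasureTheory.Measure.haar with hμH
  haveI : μH.IsHaarMeasure := inferInstance
  -- an injective measurable map `X → [0,1]`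
  obtain ⟨e, he⟩ := exists_measurableEmbedding_real (α := X)
  have hπ : (0:ℝ) < Real.pi := Real.pi_pos
  set f : X → ℝ := fun x => 1/2 + Real.arctan (e x) / Real.pi with hfdef
  have hf : Measurable f :=
    measurable_const.add ((Real.continuous_arctan.measurable.comp he.measurable).div_const _)
  have hf01 : ∀ x, f x ∈ Set.Icc (0:ℝ) 1 := by
    intro x
    have h1 := Real.neg_pi_div_two_lt_arctan (e x)
    have h2 := Real.arctan_lt_pi_div_two (e x)
    have hle : Real.arctan (e x) / Real.pi ≤ 1/2 := by
      rw [div_le_iff₀ hπ]; nlinarith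
    have hge : -(1/2 : ℝ) ≤ Real.arctan (e x) / Real.pi := by
      rw [le_div_iff₀ hπ]; nlinarith
    exact ⟨by rw [hfdef]; dsimp only; linarith, by rw [hfdef]; dsimp only; linarith⟩
  have hfinj : Function.Injective f := by
    intro x y hxy
    rw [hfdef] at hxy
    dsimp only at hxy
    have h1 : Real.arctan (e x) = Real.arctan (e y) := by
      field_simp at hxy
      linarith
    exact he.injective (Real.arctan_injective h1)
  -- index decoding
  set dec : ℕ → List (ℕ × ℚ) × ℕ := fun n => (Encodable.decode n).getD ([], 0) with hdecdef
  have hdec : ∀ t : List (ℕ × ℚ) × ℕ, dec (Encodable.encode t) = t := fun t => by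
    show (Encodable.decode (Encodable.encode t)).getD ([], 0) = t
    rw [Encodable.encodek]
    rfl
  -- the factor map
  set φ : X → LipSeq G := fun x =>
    ⟨fun n h => PhiF μH c f a x (dec n) h, fun n =>
      ⟨PhiF_lipschitz μH c f a hd hball hf hf01 hameas x (dec n),
       fun h => PhiF_mem_Icc μH c f a hd hball hf hf01 hameas x (dec n) h⟩⟩ with hφdef
  have hφmeas : Measurable φ := by
    apply Measurable.subtype_mk
    apply measurable_pi_lambda
    intro n
    apply measurable_pi_lambda
    intro h
    exact PhiF_measurable μH c f a hf hameas (dec n) h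
  have hequi : ∀ (g : G) (x : X), (φ (a g x)).1 = fun n h => (φ x).1 n (h * g) := by
    intro g x
    funext n h
    exact PhiF_equivariant μH c f a hmul g x (dec n) h
  refine ⟨Measure.map φ μ, Measure.isProbabilityMeasure_map hφmeas.aemeasurable, ?_,
    Set.univ, φ, MeasurableSet.univ, measure_univ, fun _ _ _ => trivial, hφmeas, ?_,
    fun g x _ => hequi g x, rfl⟩
  · -- invariance of the pushforward measure under the shift maps
    intro g m hm
    have hgLip : LipschitzWith 1 (fun h : G => h * g) := by
      apply LipschitzWith.of_dist_le_mul
      intro h h'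
      rw [hd h h' g, NNReal.coe_one, one_mul]
    set shift : LipSeq G → LipSeq G := fun F =>
      ⟨fun n h => F.1 n (h * g), fun n =>
        ⟨by have h2 := (F.2 n).1.comp hgLip; rw [mul_one] at h2; exact h2, fun h => (F.2 n).2 (h * g)⟩⟩ with hshiftdef
    have hmeq : m = shift := by
      funext F
      exact Subtype.ext (hm F)
    have hshiftmeas : Measurable shift := by
      apply Measurable.subtype_mk
      apply measurable_pi_lambda
      intro n
      apply measurable_pi_lambda
      intro h
      exact (measurable_pi_apply (h * g)).comp
        ((measurable_pi_apply n).comp measurable_subtype_coe)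
    rw [hmeq]
    refine ⟨hshiftmeas, ?_⟩
    rw [Measure.map_map hshiftmeas hφmeas]
    have hcomp : shift ∘ φ = φ ∘ (a g) := by
      funext x
      apply Subtype.ext
      show (fun n h => (φ x).1 n (h * g)) = (φ (a g x)).1
      rw [hequi g x]
    rw [hcomp, ← Measure.map_map hφmeas (hpres g).measurable, (hpres g).map_eq]
  · -- injectivity
    intro x _ y _ hxyeq
    apply PhiF_injective μH c f a hd hball hc hf hfinj hf01 hameas hid hmul
    intro t h
    have h1 := congrArg Subtype.val hxyeq
    have h2 := congrFun (congrFun h1 (Encodable.encode t)) h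
    simpa [hφdef, hdec t] using h2
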